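/- Under assumption (T1), the Hilbert-space adjoint 𝓛* of the turning operator satisfies 𝓛*1 = 0, i.e. the constant function 1 is an eigenfunction of 𝓛* for the eigenvalue 0; if in addition (T2) and (T4) hold, then the kernel of 𝓛* is exactly the one-dimensional span of the constant function 1. Consequently, the equation 𝓛p = h with h ∈ L²(V) is solvable only if ∫_V h(v) dv = 0. -/

import Mathlib

open MeasureTheory

namespace TOaux
variable {α : Type*} [MeasurableSpace α] {μ : Measure α}

lemma l2_mul_integrable {f g : α → ℝ} (hf : MemLp f 2 μ) (hg : MemLp g 2 μ) :
    Integrable (fun x => f x * g x) μ := by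
  have hf2 : Integrable (fun x => f x ^ 2) μ := (memLp_two_iff_integrable_sq hf.1).mp hf
  have hg2 : Integrable (fun x => g x ^ 2) μ := (memLp_two_iff_integrable_sq hg.1).mp hg
  refine Integrable.mono' ((hf2.add hg2).div_const 2) (hf.1.mul hg.1) ?_
  filter_upwards with x
  have : |f x * g x| ≤ (f x ^ 2 + g x ^ 2) / 2 := by
    rw [abs_mul]
    nlinarith [sq_nonneg (|f x| - |g x|), sq_abs (f x), sq_abs (g x), abs_nonneg (f x), abs_nonneg (g x)]
  simpa [Real.norm_eq_abs, abs_mul] using this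

variable [IsFiniteMeasure μ]

lemma comp_fst_integrable {f : α → ℝ} (hf : Integrable f μ) :
    Integrable (fun z : α × α => f z.1) (μ.prod μ) := by
  have h1 : Integrable f ((μ.prod μ).map Prod.fst) := by
    rw [Measure.map_fst_prod]
    exact hf.smul_measure (measure_ne_top μ _)
  exact (integrable_map_measure (by rw [Measure.map_fst_prod]; exact hf.1.mono_ac Measure.smul_absolutelyContinuous)
    measurable_fst.aemeasurable).mp h1

lemma comp_snd_integrable {f : α → ℝ} (hf : Integrable f μ) :
    Integrable (fun z : α × α => f z.2) (μ.prod μ) :=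
  (comp_fst_integrable hf).swap

lemma kernel_mul_integrable {K : α × α → ℝ}
    (hKm : AEStronglyMeasurable K (μ.prod μ))
    (hK2 : Integrable (fun z => K z ^ 2) (μ.prod μ))
    {F : α × α → ℝ} (hFm : AEStronglyMeasurable F (μ.prod μ))
    (hF2 : Integrable (fun z => F z ^ 2) (μ.prod μ)) :
    Integrable (fun z => K z * F z) (μ.prod μ) := by
  refine Integrable.mono' ((hK2.add hF2).div_const 2) (hKm.mul hFm) ?_
  filter_upwards with z
  have : |K z| * |F z| ≤ (K z ^ 2 + F z ^ 2) / 2 := by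
    nlinarith [sq_nonneg (|K z| - |F z|), sq_abs (K z), sq_abs (F z),
      abs_nonneg (K z), abs_nonneg (F z)]
  simpa [Real.norm_eq_abs, abs_mul] using this

lemma kernel_mul_fst_integrable {K : α × α → ℝ}
    (hKm : AEStronglyMeasurable K (μ.prod μ))
    (hK2 : Integrable (fun z => K z ^ 2) (μ.prod μ))
    {f : α → ℝ} (hf : MemLp f 2 μ) :
    Integrable (fun z => K z * f z.1) (μ.prod μ) := by
  have hf2 : Integrable (fun x => f x ^ 2) μ := (memLp_two_iff_integrable_sq hf.1).mp hf
  exact kernel_mul_integrable hKm hK2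
    (hf.1.comp_quasiMeasurePreserving Measure.quasiMeasurePreserving_fst)
    (comp_fst_integrable hf2)

lemma kernel_mul_snd_integrable {K : α × α → ℝ}
    (hKm : AEStronglyMeasurable K (μ.prod μ))
    (hK2 : Integrable (fun z => K z ^ 2) (μ.prod μ))
    {f : α → ℝ} (hf : MemLp f 2 μ) :
    Integrable (fun z => K z * f z.2) (μ.prod μ) := by
  have hf2 : Integrable (fun x => f x ^ 2) μ := (memLp_two_iff_integrable_sq hf.1).mp hf
  exact kernel_mul_integrable hKm hK2
    (hf.1.comp_quasiMeasurePreserving Measure.quasiMeasurePreserving_snd)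
    (comp_snd_integrable hf2)

lemma kernel_mul_both_integrable {K : α × α → ℝ}
    (hKm : AEStronglyMeasurable K (μ.prod μ))
    (hK2 : Integrable (fun z => K z ^ 2) (μ.prod μ))
    {f g : α → ℝ} (hf : MemLp f 2 μ) (hg : MemLp g 2 μ) :
    Integrable (fun z => K z * (f z.1 * g z.2)) (μ.prod μ) := by
  have hf2 : Integrable (fun x => f x ^ 2) μ := (memLp_two_iff_integrable_sq hf.1).mp hf
  have hg2 : Integrable (fun x => g x ^ 2) μ := (memLp_two_iff_integrable_sq hg.1).mp hg
  have hFm : AEStronglyMeasurable (fun z : α × α => f z.1 * g z.2) (μ.prod μ) :=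
    (hf.1.comp_quasiMeasurePreserving Measure.quasiMeasurePreserving_fst).mul
      (hg.1.comp_quasiMeasurePreserving Measure.quasiMeasurePreserving_snd)
  have hF2 : Integrable (fun z : α × α => (f z.1 * g z.2) ^ 2) (μ.prod μ) := by
    have := (hf2.mul_prod hg2 : Integrable (fun z : α × α => f z.1 ^ 2 * g z.2 ^ 2) (μ.prod μ))
    simpa [mul_pow] using this
  exact kernel_mul_integrable hKm hK2 hFm hF2

lemma key_swap {K : α × α → ℝ}
    (hKm : AEStronglyMeasurable K (μ.prod μ))
    (hK2 : Integrable (fun z => K z ^ 2) (μ.prod μ))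
    {f : α → ℝ} (hf : MemLp f 2 μ)
    (hnorm : ∀ᵐ x ∂μ, ∫ y, K (x, y) ∂μ = 1) :
    ∫ y, ∫ x, K (x, y) * f x ∂μ ∂μ = ∫ x, f x ∂μ := by
  have hH : Integrable (Function.uncurry fun x y => K (x, y) * f x) (μ.prod μ) := by
    exact kernel_mul_fst_integrable hKm hK2 hf
  have hswap := (integral_integral_swap hH).symm
  rw [hswap]
  have : ∀ᵐ x ∂μ, ∫ y, K (x, y) * f x ∂μ = f x := by
    filter_upwards [hnorm] with x hx
    rw [integral_mul_const, hx, one_mul]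
  rw [integral_congr_ae this]




lemma ae_ae_swap {p : α × α → Prop} (h : ∀ᵐ z ∂(μ.prod μ), p z) :
    ∀ᵐ y ∂μ, ∀ᵐ x ∂μ, p (x, y) := by
  have h' : ∀ᵐ z ∂(μ.prod μ), p (Prod.swap z) :=
    (Measure.measurePreserving_swap (μ := μ) (ν := μ)).quasiMeasurePreserving.ae h
  exact Measure.ae_ae_of_ae_prod h'



lemma nonneg_fixed
    {K : α × α → ℝ} (hKm : AEStronglyMeasurable K (μ.prod μ))
    (hK2 : Integrable (fun z => K z ^ 2) (μ.prod μ))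
    {η₀ φ ψ : α → ℝ} (hη : MemLp η₀ 2 μ) (hη0 : ∀ᵐ v ∂μ, 0 ≤ η₀ v)
    (hφpos : ∀ᵐ v ∂μ, 0 < φ v) (hψpos : ∀ᵐ v ∂μ, 0 < ψ v)
    (hbd : ∀ᵐ z ∂(μ.prod μ), η₀ z.1 * φ z.2 ≤ K z ∧ K z ≤ η₀ z.1 * ψ z.2)
    {s : α → ℝ} (hs : MemLp s 2 μ) (hs0 : ∀ᵐ v ∂μ, 0 ≤ s v)
    (hfix : ∀ᵐ y ∂μ, s y = ∫ x, K (x, y) * s x ∂μ) :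
    (s =ᵐ[μ] 0) ∨ (∀ᵐ v ∂μ, 0 < s v) := by
  set I := ∫ x, η₀ x * s x ∂μ with hI
  have hηs : Integrable (fun x => η₀ x * s x) μ := l2_mul_integrable hη hs
  have hI0 : 0 ≤ I :=
    integral_nonneg_of_ae (by filter_upwards [hη0, hs0] with x h1 h2; positivity)
  have hslice : ∀ᵐ y ∂μ, Integrable (fun x => K (x, y) * s x) μ := by
    have h := (kernel_mul_fst_integrable hKm hK2 hs).swap.prod_right_ae
    simpa [Function.comp] using h
  have hbd' := ae_ae_swap hbd
  have key : ∀ᵐ y ∂μ, φ y * I ≤ s y ∧ s y ≤ ψ y * I := by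
    filter_upwards [hfix, hslice, hbd'] with y hy hyint hybd
    constructor
    · have mono : ∫ x, φ y * (η₀ x * s x) ∂μ ≤ ∫ x, K (x, y) * s x ∂μ := by
        refine integral_mono_ae (hηs.const_mul (φ y)) hyint ?_
        filter_upwards [hs0, hybd] with x hx hbx
        nlinarith [mul_le_mul_of_nonneg_right hbx.1 hx]
      rw [integral_const_mul] at mono
      rw [hy]; exact mono
    · have mono : ∫ x, K (x, y) * s x ∂μ ≤ ∫ x, ψ y * (η₀ x * s x) ∂μ := by
        refine integral_mono_ae hyint (hηs.const_mul (ψ y)) ?_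
        filter_upwards [hs0, hybd] with x hx hbx
        nlinarith [mul_le_mul_of_nonneg_right hbx.2 hx]
      rw [integral_const_mul] at mono
      rw [hy]; exact mono
  rcases hI0.lt_or_eq with h | h
  · right
    filter_upwards [key, hφpos] with v hv hφ
    exact lt_of_lt_of_le (by positivity) hv.1
  · left
    filter_upwards [key, hs0, hψpos] with v hv h0 hψv
    have : s v ≤ 0 := by rw [← h] at hv; simpa using hv.2
    exact le_antisymm this h0

lemma abs_fixed
    {K : α × α → ℝ} (hKm : AEStronglyMeasurable K (μ.prod μ))
    (hK2 : Integrable (fun z => K z ^ 2) (μ.prod μ))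
    (hKpos : ∀ᵐ z ∂(μ.prod μ), 0 ≤ K z)
    (hrow : ∀ᵐ x ∂μ, ∫ y, K (x, y) ∂μ = 1)
    {r : α → ℝ} (hr : MemLp r 2 μ)
    (hfix : ∀ᵐ y ∂μ, r y = ∫ x, K (x, y) * r x ∂μ) :
    ∀ᵐ y ∂μ, |r y| = ∫ x, K (x, y) * |r x| ∂μ := by
  have habs : MemLp (fun x => |r x|) 2 μ := by
    simpa [Real.norm_eq_abs] using hr.norm
  set u : α → ℝ := fun y => ∫ x, K (x, y) * |r x| ∂μ with hu
  have hGint : Integrable (fun z => K z * |r z.1|) (μ.prod μ) :=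
    kernel_mul_fst_integrable hKm hK2 habs
  have huint : Integrable u μ := by
    simpa using hGint.integral_prod_right
  have hKpos' := ae_ae_swap hKpos
  have hslice_r : ∀ᵐ y ∂μ, Integrable (fun x => K (x, y) * r x) μ := by
    have h := (kernel_mul_fst_integrable hKm hK2 hr).swap.prod_right_ae
    simpa [Function.comp] using h
  have hle : ∀ᵐ y ∂μ, |r y| ≤ u y := by
    filter_upwards [hfix, hKpos', hslice_r] with y hy hpos hint
    rw [hy]
    calc |∫ x, K (x, y) * r x ∂μ| ≤ ∫ x, |K (x, y) * r x| ∂μ := by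
          simpa [Real.norm_eq_abs, abs_mul] using norm_integral_le_integral_norm (fun x => K (x, y) * r x)
      _ = u y := by
          refine integral_congr_ae ?_
          filter_upwards [hpos] with x hx
          rw [abs_mul, abs_of_nonneg hx]
  have hmass_u : ∫ y, u y ∂μ = ∫ x, |r x| ∂μ := key_swap hKm hK2 habs hrow
  have hrint : Integrable (fun x => |r x|) μ := habs.integrable one_le_two
  have hzero : ∫ y, (u y - |r y|) ∂μ = 0 := by
    rw [integral_sub huint hrint, hmass_u, sub_self]
  have h0 : (fun y => u y - |r y|) =ᵐ[μ] 0 :=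
    (integral_eq_zero_iff_of_nonneg_ae
      (by filter_upwards [hle] with y h using sub_nonneg.mpr h) (huint.sub hrint)).mp hzero
  filter_upwards [h0] with y h
  have : u y - |r y| = 0 := h
  linarith



lemma fixed_point_const
    (hμ : μ Set.univ ≠ 0)
    {K : α × α → ℝ} (hKm : AEStronglyMeasurable K (μ.prod μ))
    (hK2 : Integrable (fun z => K z ^ 2) (μ.prod μ))
    (hKpos : ∀ᵐ z ∂(μ.prod μ), 0 ≤ K z)
    (hcol : ∀ᵐ y ∂μ, ∫ x, K (x, y) ∂μ = 1)
    (hrow : ∀ᵐ x ∂μ, ∫ y, K (x, y) ∂μ = 1)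
    {η₀ φ ψ : α → ℝ} (hη : MemLp η₀ 2 μ) (hη0 : ∀ᵐ v ∂μ, 0 ≤ η₀ v)
    (hφpos : ∀ᵐ v ∂μ, 0 < φ v) (hψpos : ∀ᵐ v ∂μ, 0 < ψ v)
    (hbd : ∀ᵐ z ∂(μ.prod μ), η₀ z.1 * φ z.2 ≤ K z ∧ K z ≤ η₀ z.1 * ψ z.2)
    {q : α → ℝ} (hq : MemLp q 2 μ)
    (hfix : ∀ᵐ y ∂μ, q y = ∫ x, K (x, y) * q x ∂μ) :
    ∃ c : ℝ, q =ᵐ[μ] fun _ => c := by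
  have hmass : (μ Set.univ).toReal ≠ 0 := by
    simp [ENNReal.toReal_eq_zero_iff, hμ, measure_ne_top]
  set c : ℝ := (∫ x, q x ∂μ) / (μ Set.univ).toReal with hc
  set r : α → ℝ := fun v => q v - c with hrdef
  refine ⟨c, ?_⟩
  have hqint : Integrable q μ := hq.integrable one_le_two
  have hrmem : MemLp r 2 μ := hq.sub (memLp_const c)
  have hrint : Integrable r μ := hrmem.integrable one_le_two
  have hr0 : ∫ v, r v ∂μ = 0 := by
    rw [hrdef]
    simp only
    rw [integral_sub hqint (integrable_const c), integral_const, smul_eq_mul, hc]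
    field_simp
    simp [measureReal_def]
  -- r is a fixed point
  have hKint : Integrable K (μ.prod μ) := by
    have := kernel_mul_fst_integrable (μ := μ) hKm hK2 (memLp_const (1:ℝ))
    simpa using this
  have hsliceK : ∀ᵐ y ∂μ, Integrable (fun x => K (x, y)) μ := by
    have h := hKint.swap.prod_right_ae
    simpa [Function.comp] using h
  have hslice_q : ∀ᵐ y ∂μ, Integrable (fun x => K (x, y) * q x) μ := by
    have h := (kernel_mul_fst_integrable hKm hK2 hq).swap.prod_right_ae
    simpa [Function.comp] using h
  have hrfix : ∀ᵐ y ∂μ, r y = ∫ x, K (x, y) * r x ∂μ := by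
    filter_upwards [hfix, hcol, hsliceK, hslice_q] with y hy hcy hKy hqy
    have : ∫ x, K (x, y) * r x ∂μ
        = (∫ x, K (x, y) * q x ∂μ) - ∫ x, K (x, y) * c ∂μ := by
      rw [← integral_sub hqy (hKy.mul_const c)]
      congr 1; funext x; rw [hrdef]; ring
    rw [this, integral_mul_const, hcy, one_mul, ← hy]
  have habsfix := abs_fixed hKm hK2 hKpos hrow hrmem hrfix
  have habsmem : MemLp (fun x => |r x|) 2 μ := by
    simpa [Real.norm_eq_abs] using hrmem.norm
  have hslice_r : ∀ᵐ y ∂μ, Integrable (fun x => K (x, y) * r x) μ := by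
    have h := (kernel_mul_fst_integrable hKm hK2 hrmem).swap.prod_right_ae
    simpa [Function.comp] using h
  have hslice_abs : ∀ᵐ y ∂μ, Integrable (fun x => K (x, y) * |r x|) μ := by
    have h := (kernel_mul_fst_integrable hKm hK2 habsmem).swap.prod_right_ae
    simpa [Function.comp] using h
  -- plus and minus parts
  have hplusfix : ∀ᵐ y ∂μ, (|r y| + r y) = ∫ x, K (x, y) * (|r x| + r x) ∂μ := by
    filter_upwards [habsfix, hrfix, hslice_r, hslice_abs] with y h1 h2 h3 h4
    have : ∫ x, K (x, y) * (|r x| + r x) ∂μ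
        = (∫ x, K (x, y) * |r x| ∂μ) + ∫ x, K (x, y) * r x ∂μ := by
      rw [← integral_add h4 h3]
      congr 1; funext x; ring
    rw [this, ← h1, ← h2]
  have hminusfix : ∀ᵐ y ∂μ, (|r y| - r y) = ∫ x, K (x, y) * (|r x| - r x) ∂μ := by
    filter_upwards [habsfix, hrfix, hslice_r, hslice_abs] with y h1 h2 h3 h4
    have : ∫ x, K (x, y) * (|r x| - r x) ∂μ
        = (∫ x, K (x, y) * |r x| ∂μ) - ∫ x, K (x, y) * r x ∂μ := by
      rw [← integral_sub h4 h3]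
      congr 1; funext x; ring
    rw [this, ← h1, ← h2]
  have hplus := nonneg_fixed hKm hK2 hη hη0 hφpos hψpos hbd (habsmem.add hrmem)
    (by filter_upwards with v using by simp [abs_nonneg, neg_abs_le]; linarith [neg_abs_le (r v)])
    hplusfix
  have hminus := nonneg_fixed hKm hK2 hη hη0 hφpos hψpos hbd (habsmem.sub hrmem)
    (by filter_upwards with v using by simp [sub_nonneg, le_abs_self])
    hminusfix
  have hrzero : r =ᵐ[μ] 0 := by
    rcases hplus with hp | hp
    · -- |r| + r = 0 a.e., so r ≤ 0 a.e. and |r| = -r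
      have hneg : ∀ᵐ v ∂μ, r v ≤ 0 := by
        filter_upwards [hp] with v hv
        have : |r v| + r v = 0 := hv
        have := abs_nonneg (r v); linarith
      have : (fun v => -r v) =ᵐ[μ] 0 := by
        have hint : Integrable (fun v => -r v) μ := hrint.neg
        have hz : ∫ v, -r v ∂μ = 0 := by rw [integral_neg, hr0, neg_zero]
        exact (integral_eq_zero_iff_of_nonneg_ae
          (by filter_upwards [hneg] with v hv using by simpa using hv) hint).mp hz
      filter_upwards [this] with v hv
      have : -r v = 0 := hv
      simpa using by linarith
    rcases hminus with hm | hm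
    · have hpos : ∀ᵐ v ∂μ, 0 ≤ r v := by
        filter_upwards [hm] with v hv
        have : |r v| - r v = 0 := hv
        have := abs_nonneg (r v); linarith
      exact (integral_eq_zero_iff_of_nonneg_ae hpos hrint).mp hr0
    · exfalso
      have : ∀ᵐ v ∂μ, False := by
        filter_upwards [hp, hm] with v h1 h2
        have h1' : 0 < |r v| + r v := h1
        have h2' : 0 < |r v| - r v := h2
        rcases abs_cases (r v) with ⟨he, _⟩ | ⟨he, _⟩ <;> rw [he] at h1' h2' <;> linarith
      have hne : (Filter.NeBot (ae μ)) := ae_neBot.mpr (by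
        intro h0; exact hμ (by simp [h0]))
      exact (this.exists).choose_spec
  filter_upwards [hrzero] with v hv
  have : q v - c = 0 := hv
  linarith

end TOaux


set_option maxHeartbeats 1000000 in
open TOaux in
theorem TOmain {E : Type*} [MeasurableSpace E] {μ : Measure E} [IsFiniteMeasure μ]
    (hμne : μ Set.univ ≠ 0)
    (T : E → E → ℝ)
    (hTmeas : Measurable (Function.uncurry T))
    (hT1_nonneg : ∀ᵐ z ∂(μ.prod μ), 0 ≤ T z.1 z.2)
    (hT1_norm : ∀ᵐ v' ∂μ, ∫ v, T v v' ∂μ = 1)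
    (hT1_sq : Integrable (fun z => (T z.1 z.2) ^ 2) (μ.prod μ))
    (𝒯 𝓛 : Lp ℝ 2 μ →L[ℝ] Lp ℝ 2 μ)
    (h𝒯 : ∀ p : Lp ℝ 2 μ,
      (𝒯 p : E → ℝ) =ᵐ[μ] fun v => ∫ v', T v v' * p v' ∂μ)
    (lam : ℝ) (hlam : 0 < lam)
    (h𝓛 : 𝓛 = lam • (𝒯 - ContinuousLinearMap.id ℝ (Lp ℝ 2 μ)))
    (one : Lp ℝ 2 μ)
    (hone : (one : E → ℝ) =ᵐ[μ] fun _ => 1) :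
    ContinuousLinearMap.adjoint 𝓛 one = 0 ∧
    ((∃ η₀ φ ψ : E → ℝ,
        MemLp η₀ 2 μ ∧ MemLp φ 2 μ ∧ MemLp ψ 2 μ ∧
        (∀ᵐ v ∂μ, 0 ≤ η₀ v) ∧
        ¬ (η₀ =ᵐ[μ] 0) ∧
        (∀ᵐ v ∂μ, 0 < φ v) ∧
        (∀ᵐ v ∂μ, 0 < ψ v) ∧
        (∀ᵐ z ∂(μ.prod μ),
          η₀ z.1 * φ z.2 ≤ T z.1 z.2 ∧ T z.1 z.2 ≤ η₀ z.1 * ψ z.2)) →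
      (∀ᵐ v ∂μ, ∫ v', T v v' ∂μ = 1) →
      LinearMap.ker (ContinuousLinearMap.adjoint 𝓛).toLinearMap = Submodule.span ℝ {one}) ∧
    (∀ h : Lp ℝ 2 μ, (∃ p, 𝓛 p = h) → ∫ v, (h : E → ℝ) v ∂μ = 0) := by
  -- kernel as a function on the product
  have hKm : AEStronglyMeasurable (fun z : E × E => T z.1 z.2) (μ.prod μ) :=
    hTmeas.aestronglyMeasurable
  have hKm' : AEStronglyMeasurable (fun z : E × E => T z.2 z.1) (μ.prod μ) :=
    (hTmeas.comp measurable_swap).aestronglyMeasurable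
  have hK2' : Integrable (fun z : E × E => T z.2 z.1 ^ 2) (μ.prod μ) := by
    exact hT1_sq.swap
  -- mass conservation of 𝒯
  have hTone : ∀ p : Lp ℝ 2 μ, ∫ v, (𝒯 p : E → ℝ) v ∂μ = ∫ v, (p : E → ℝ) v ∂μ := by
    intro p
    have h1 : ∫ v, (𝒯 p : E → ℝ) v ∂μ = ∫ y, ∫ x, T y x * (p : E → ℝ) x ∂μ ∂μ :=
      integral_congr_ae (h𝒯 p)
    rw [h1]
    exact key_swap (K := fun z : E × E => T z.2 z.1) hKm' hK2' (Lp.memLp p) hT1_norm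
  -- inner products with one
  have hinner_one : ∀ p : Lp ℝ 2 μ, (inner ℝ (𝓛 p) one : ℝ) = 0 := by
    intro p
    have hcoe : (𝓛 p : E → ℝ) =ᵐ[μ]
        fun v => lam * ((𝒯 p : E → ℝ) v - (p : E → ℝ) v) := by
      have e : 𝓛 p = lam • (𝒯 p - p) := by
        rw [h𝓛]; rfl
      rw [e]
      filter_upwards [Lp.coeFn_smul lam (𝒯 p - p), Lp.coeFn_sub (𝒯 p) p] with v e1 e2
      rw [e1]
      simp only [Pi.smul_apply, smul_eq_mul, e2, Pi.sub_apply]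
    have hint𝒯 : Integrable ((𝒯 p : E → ℝ)) μ := (Lp.memLp (𝒯 p)).integrable one_le_two
    have hintp : Integrable ((p : E → ℝ)) μ := (Lp.memLp p).integrable one_le_two
    rw [MeasureTheory.L2.inner_def]
    have : ∫ v, (inner ℝ ((𝓛 p : E → ℝ) v) ((one : E → ℝ) v) : ℝ) ∂μ
        = ∫ v, lam * ((𝒯 p : E → ℝ) v - (p : E → ℝ) v) ∂μ := by
      refine integral_congr_ae ?_
      filter_upwards [hcoe, hone] with v e1 e2
      simp [RCLike.inner_apply, e1, e2]
    rw [this, integral_const_mul, integral_sub hint𝒯 hintp, hTone p, sub_self, mul_zero]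
  -- Part 1
  have part1 : ContinuousLinearMap.adjoint 𝓛 one = 0 := by
    have h0 : (inner ℝ (ContinuousLinearMap.adjoint 𝓛 one)
        (ContinuousLinearMap.adjoint 𝓛 one) : ℝ) = 0 := by
      rw [ContinuousLinearMap.adjoint_inner_left]
      rw [real_inner_comm]
      exact hinner_one _
    exact inner_self_eq_zero.mp h0
  refine ⟨part1, ?_, ?_⟩
  · -- Part 2
    rintro ⟨η₀, φ, ψ, hηmem, hφmem, hψmem, hη0, hηne, hφpos, hψpos, hbd⟩ hT4
    apply le_antisymm
    · intro q hq
      have hq0 : ContinuousLinearMap.adjoint 𝓛 q = 0 := LinearMap.mem_ker.mp hq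
      -- q is a fixed point of the adjoint of 𝒯
      have hTq : ∀ p : Lp ℝ 2 μ, (inner ℝ (𝒯 p) q : ℝ) = inner ℝ p q := by
        intro p
        have h0 : (inner ℝ (𝓛 p) q : ℝ) = 0 := by
          rw [← ContinuousLinearMap.adjoint_inner_right, hq0, inner_zero_right]
        rw [h𝓛] at h0
        have e : (lam • (𝒯 - ContinuousLinearMap.id ℝ (Lp ℝ 2 μ))) p = lam • (𝒯 p - p) := rfl
        rw [e, real_inner_smul_left, inner_sub_left] at h0
        have := mul_eq_zero.mp h0
        rcases this with h | h
        · exact absurd h hlam.ne'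
        · linarith [h]
      set qf := (q : E → ℝ) with hqf
      have hqmem : MemLp qf 2 μ := Lp.memLp q
      have hqint : Integrable qf μ := hqmem.integrable one_le_two
      set g : E → ℝ := fun y => ∫ x, T x y * qf x ∂μ with hg
      have hGint : Integrable (fun z : E × E => T z.1 z.2 * qf z.1) (μ.prod μ) :=
        kernel_mul_fst_integrable hKm hT1_sq hqmem
      have hgint : Integrable g μ := by
        simpa using hGint.integral_prod_right
      -- q agrees a.e. with g
      have hset : ∀ s : Set E, MeasurableSet s → μ s < ⊤ →
          ∫ x in s, (g x - qf x) ∂μ = 0 := by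
        intro s hs _
        set ps := indicatorConstLp 2 hs (measure_ne_top μ s) (1 : ℝ) with hps_def
        have hps : (ps : E → ℝ) =ᵐ[μ] s.indicator fun _ => 1 :=
          indicatorConstLp_coeFn
        have hpsmem : MemLp ((ps : E → ℝ)) 2 μ := Lp.memLp ps
        -- compute inner ℝ (𝒯 ps) q
        have hF : Integrable (fun z : E × E => T z.1 z.2 * (ps : E → ℝ) z.2 * qf z.1)
            (μ.prod μ) := by
          have := kernel_mul_both_integrable hKm hT1_sq hqmem hpsmem
          refine this.congr ?_
          filter_upwards with z
          ring
        have hA : (inner ℝ (𝒯 ps) q : ℝ) = ∫ x, g x * (ps : E → ℝ) x ∂μ := by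
          rw [MeasureTheory.L2.inner_def]
          have e1 : ∫ v, (inner ℝ ((𝒯 ps : E → ℝ) v) (qf v) : ℝ) ∂μ
              = ∫ v, (∫ x, T v x * (ps : E → ℝ) x ∂μ) * qf v ∂μ := by
            refine integral_congr_ae ?_
            filter_upwards [h𝒯 ps] with v e
            simp [RCLike.inner_apply, e, mul_comm]
          rw [e1]
          have e2 : ∫ v, (∫ x, T v x * (ps : E → ℝ) x ∂μ) * qf v ∂μ
              = ∫ v, ∫ x, T v x * (ps : E → ℝ) x * qf v ∂μ ∂μ := by
            refine integral_congr_ae (Filter.Eventually.of_forall fun v => ?_)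
            exact (integral_mul_const (qf v) fun x => T v x * (ps : E → ℝ) x).symm
          rw [e2]
          have hswap := integral_integral_swap
            (f := fun v x => T v x * (ps : E → ℝ) x * qf v) (by exact hF)
          rw [hswap]
          refine integral_congr_ae (Filter.Eventually.of_forall fun x => ?_)
          have : ∀ v, T v x * (ps : E → ℝ) x * qf v = (T v x * qf v) * (ps : E → ℝ) x := by
            intro v; ring
          simp_rw [this]
          rw [integral_mul_const]
        have hB : (inner ℝ ps q : ℝ) = ∫ x, (ps : E → ℝ) x * qf x ∂μ := by
          rw [MeasureTheory.L2.inner_def]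
          simp [RCLike.inner_apply]
          exact integral_congr_ae (Filter.Eventually.of_forall fun a => mul_comm _ _)
        have hAB : ∫ x, g x * (ps : E → ℝ) x ∂μ = ∫ x, (ps : E → ℝ) x * qf x ∂μ := by
          rw [← hA, ← hB, hTq ps]
        have eg : ∫ x, g x * (ps : E → ℝ) x ∂μ = ∫ x in s, g x ∂μ := by
          rw [← integral_indicator hs]
          refine integral_congr_ae ?_
          filter_upwards [hps] with x hx
          rw [hx]
          by_cases hxs : x ∈ s <;> simp [hxs]
        have eq' : ∫ x, (ps : E → ℝ) x * qf x ∂μ = ∫ x in s, qf x ∂μ := by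
          rw [← integral_indicator hs]
          refine integral_congr_ae ?_
          filter_upwards [hps] with x hx
          rw [hx]
          by_cases hxs : x ∈ s <;> simp [hxs]
        rw [integral_sub hgint.integrableOn hqint.integrableOn, ← eg, ← eq', hAB, sub_self]
      have hgq : qf =ᵐ[μ] g := by
        have h0 := Integrable.ae_eq_zero_of_forall_setIntegral_eq_zero
          (hgint.sub hqint) hset
        filter_upwards [h0] with x hx
        have : g x - qf x = 0 := hx
        linarith
      have hfix : ∀ᵐ y ∂μ, qf y = ∫ x, T x y * qf x ∂μ := by
        filter_upwards [hgq] with y hy using hy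
      obtain ⟨c, hcq⟩ := fixed_point_const hμne hKm hT1_sq hT1_nonneg hT1_norm hT4
        hηmem hη0 hφpos hψpos hbd hqmem hfix
      have hq_eq : q = c • one := by
        apply Lp.ext
        filter_upwards [hcq, Lp.coeFn_smul c one, hone] with v h1 h2 h3
        rw [h2]
        simp only [Pi.smul_apply, h3, smul_eq_mul, mul_one]
        exact h1
      rw [hq_eq]
      exact Submodule.mem_span_singleton.mpr ⟨c, rfl⟩
    · rw [Submodule.span_le, Set.singleton_subset_iff]
      exact LinearMap.mem_ker.mpr part1
  · -- Part 3
    rintro h ⟨p, hp⟩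
    have e1 : (inner ℝ h one : ℝ) = ∫ v, (h : E → ℝ) v ∂μ := by
      rw [MeasureTheory.L2.inner_def]
      refine integral_congr_ae ?_
      filter_upwards [hone] with v hv
      simp [RCLike.inner_apply, hv]
    have e2 : (inner ℝ h one : ℝ) = 0 := by
      rw [← hp]
      exact hinner_one p
    rw [← e1, e2]

/-- Under (T1), the adjoint `𝓛*` of the turning operator kills the constant function `1`;
if in addition (T2) and (T4) hold, the kernel of `𝓛*` is exactly the span of `1`.
Consequently, `𝓛p = h` is solvable only if `∫_V h = 0`. -/
theorem turning_operator_adjoint_kernel_and_solvability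
    (n : ℕ) (V : Set (EuclideanSpace ℝ (Fin n)))
    (hVc : IsCompact V) (hVpos : 0 < volume V)
    (T : EuclideanSpace ℝ (Fin n) → EuclideanSpace ℝ (Fin n) → ℝ)
    (hTmeas : Measurable (Function.uncurry T))
    -- (T1)
    (hT1_nonneg : ∀ᵐ z ∂((volume.restrict V).prod (volume.restrict V)), 0 ≤ T z.1 z.2)
    (hT1_norm : ∀ᵐ v' ∂(volume.restrict V), ∫ v in V, T v v' = 1)
    (hT1_sq : Integrable (fun z => (T z.1 z.2) ^ 2)
      ((volume.restrict V).prod (volume.restrict V)))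
    (𝒯 𝓛 : Lp ℝ 2 (volume.restrict V) →L[ℝ] Lp ℝ 2 (volume.restrict V))
    (h𝒯 : ∀ p : Lp ℝ 2 (volume.restrict V),
      (𝒯 p : EuclideanSpace ℝ (Fin n) → ℝ) =ᵐ[volume.restrict V]
        fun v => ∫ v' in V, T v v' * p v')
    (lam : ℝ) (hlam : 0 < lam)
    (h𝓛 : 𝓛 = lam • (𝒯 - ContinuousLinearMap.id ℝ (Lp ℝ 2 (volume.restrict V))))
    -- the constant function 1 as an element of L²(V)
    (one : Lp ℝ 2 (volume.restrict V))
    (hone : (one : EuclideanSpace ℝ (Fin n) → ℝ) =ᵐ[volume.restrict V] fun _ => 1) :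
    -- 𝓛* 1 = 0
    ContinuousLinearMap.adjoint 𝓛 one = 0 ∧
    -- under (T2) and (T4), ker 𝓛* = span {1}
    ((∃ η₀ φ ψ : EuclideanSpace ℝ (Fin n) → ℝ,
        MemLp η₀ 2 (volume.restrict V) ∧ MemLp φ 2 (volume.restrict V) ∧
        MemLp ψ 2 (volume.restrict V) ∧
        (∀ᵐ v ∂(volume.restrict V), 0 ≤ η₀ v) ∧
        ¬ (η₀ =ᵐ[volume.restrict V] 0) ∧
        (∀ᵐ v ∂(volume.restrict V), 0 < φ v) ∧
        (∀ᵐ v ∂(volume.restrict V), 0 < ψ v) ∧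
        (∀ᵐ z ∂((volume.restrict V).prod (volume.restrict V)),
          η₀ z.1 * φ z.2 ≤ T z.1 z.2 ∧ T z.1 z.2 ≤ η₀ z.1 * ψ z.2)) →
      (∀ᵐ v ∂(volume.restrict V), ∫ v' in V, T v v' = 1) →
      LinearMap.ker (ContinuousLinearMap.adjoint 𝓛).toLinearMap = Submodule.span ℝ {one}) ∧
    -- solvability requires zero mean
    (∀ h : Lp ℝ 2 (volume.restrict V), (∃ p, 𝓛 p = h) →
      ∫ v in V, (h : EuclideanSpace ℝ (Fin n) → ℝ) v = 0) := by
  haveI : IsFiniteMeasure (volume.restrict V) :=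
    ⟨by rw [Measure.restrict_apply_univ]; exact hVc.measure_lt_top⟩
  have hμne : (volume.restrict V) Set.univ ≠ 0 := by
    rw [Measure.restrict_apply_univ]
    exact hVpos.ne'
  exact TOmain hμne T hTmeas hT1_nonneg hT1_norm hT1_sq 𝒯 𝓛 h𝒯 lam hlam h𝓛 one hone
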